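/- arXiv:2503.00571 — 2 statements merged into one kernel-verified Lean document; each statement's English description precedes it below -/
import Mathlib

section
/- For every a ∈ (0, 1/2) and every ε ∈ (0, 1/2) there exists a constant C > 0 such that for all t > 0, ∫_0^t (t−s)^{−1/2−a} · s^{−1+a} · (1+s)^{ε} ds ≤ C · t^{−1/2} · (1+t)^{ε}. -/
open MeasureTheory Set intervalIntegral

lemma beta_piece (p q : ℝ) (hq : -1 < q) (hp0 : p ≤ 0) :
    IntervalIntegrable (fun u : ℝ => (1 - u) ^ p * u ^ q) volume 0 (1/2) := by
  have hmeas : AEStronglyMeasurable (fun u : ℝ => (1 - u) ^ p * u ^ q)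
      (volume.restrict (Set.uIoc (0:ℝ) (1/2))) :=
    (by fun_prop : Measurable fun u : ℝ => (1 - u) ^ p * u ^ q).aestronglyMeasurable
  have hg : IntervalIntegrable (fun u : ℝ => (1/2 : ℝ) ^ p * u ^ q) volume 0 (1/2) :=
    (intervalIntegral.intervalIntegrable_rpow' hq).const_mul _
  rw [intervalIntegrable_iff] at hg ⊢
  refine hg.mono' hmeas ?_
  rw [Set.uIoc_of_le (by norm_num : (0:ℝ) ≤ 1/2)]
  filter_upwards [ae_restrict_mem measurableSet_Ioc] with u hu
  have hu0 : 0 < u := hu.1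
  have hu2 : u ≤ 1/2 := hu.2
  have h1 : (1 - u : ℝ) ^ p ≤ (1/2 : ℝ) ^ p :=
    Real.rpow_le_rpow_of_nonpos (by norm_num) (by linarith) hp0
  have h2 : (0:ℝ) ≤ u ^ q := Real.rpow_nonneg hu0.le _
  rw [Real.norm_eq_abs, abs_of_nonneg (mul_nonneg (Real.rpow_nonneg (by linarith) _) h2)]
  exact mul_le_mul_of_nonneg_right h1 h2

lemma beta_integrable (p q : ℝ) (hp : -1 < p) (hp0 : p ≤ 0) (hq : -1 < q) (hq0 : q ≤ 0) :
    IntervalIntegrable (fun u : ℝ => (1 - u) ^ p * u ^ q) volume 0 1 := by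
  refine (beta_piece p q hq hp0).trans ?_
  have h := ((beta_piece q p hp hq0).comp_sub_left 1).symm
  norm_num at h
  refine h.congr fun u _ => ?_
  simp [sub_sub_cancel, mul_comm]

lemma kernel_integrable (p q t : ℝ) (hp : -1 < p) (hp0 : p ≤ 0) (hq : -1 < q) (hq0 : q ≤ 0)
    (ht : 0 < t) : IntegrableOn (fun s : ℝ => (t - s) ^ p * s ^ q) (Ioo 0 t) := by
  have hF := beta_integrable p q hp hp0 hq hq0
  have h1 : IntervalIntegrable (fun s : ℝ => (1 - s * t⁻¹) ^ p * (s * t⁻¹) ^ q) volume 0 t := by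
    have := hF.comp_mul_right (c := t⁻¹)
    simpa [div_eq_mul_inv, inv_inv] using this
  have h2 := (h1.const_mul (t ^ (p + q))).def'
  rw [Set.uIoc_of_le ht.le] at h2
  refine (h2.mono_set Ioo_subset_Ioc_self).congr_fun ?_ measurableSet_Ioo
  intro s hs
  have hs0 : 0 < s := hs.1
  have hst : s < t := hs.2
  have e1 : (1 - s * t⁻¹ : ℝ) = (t - s) * t⁻¹ := by field_simp
  have h3 : (s * t⁻¹ : ℝ) ^ q = s ^ q * (t ^ q)⁻¹ := by
    rw [Real.mul_rpow hs0.le (by positivity), Real.inv_rpow ht.le]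
  have h4 : ((t - s) * t⁻¹ : ℝ) ^ p = (t - s) ^ p * (t ^ p)⁻¹ := by
    rw [Real.mul_rpow (by linarith) (by positivity), Real.inv_rpow ht.le]
  show t ^ (p + q) * ((1 - s * t⁻¹) ^ p * (s * t⁻¹) ^ q) = (t - s) ^ p * s ^ q
  rw [e1, h4, h3, Real.rpow_add ht]
  have hp' : t ^ p ≠ 0 := (Real.rpow_pos_of_pos ht p).ne'
  have hq' : t ^ q ≠ 0 := (Real.rpow_pos_of_pos ht q).ne'
  field_simp

lemma kernel_scaling (p q t : ℝ) (ht : 0 < t) :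
    ∫ s in Ioo (0:ℝ) t, (t - s) ^ p * s ^ q =
      t ^ (p + q + 1) * ∫ u in (0:ℝ)..1, (1 - u) ^ p * u ^ q := by
  set g : ℝ → ℝ := fun s => (t - s) ^ p * s ^ q with hg
  have h1 : (∫ x in (0:ℝ)..1, g (x * t)) = t⁻¹ • ∫ x in (0:ℝ)..t, g x := by
    simpa using intervalIntegral.integral_comp_mul_right (a := (0:ℝ)) (b := 1) g ht.ne'
  have h2 : (∫ x in (0:ℝ)..t, g x) = t • ∫ x in (0:ℝ)..1, g (x * t) := by
    rw [h1, smul_smul, mul_inv_cancel₀ ht.ne', one_smul]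
  have h3 : (∫ x in (0:ℝ)..1, g (x * t)) =
      ∫ x in Ioo (0:ℝ) 1, t ^ (p + q) * ((1 - x) ^ p * x ^ q) := by
    rw [intervalIntegral.integral_of_le (by norm_num : (0:ℝ) ≤ 1),
      MeasureTheory.integral_Ioc_eq_integral_Ioo]
    refine setIntegral_congr_fun measurableSet_Ioo fun x hx => ?_
    have hx0 : 0 < x := hx.1
    have hx1 : x < 1 := hx.2
    have e2 : x * t = t * x := by ring
    have e1 : t - t * x = t * (1 - x) := by ring
    simp only [hg, e2, e1]
    rw [Real.mul_rpow ht.le (by linarith), Real.mul_rpow ht.le hx0.le, Real.rpow_add ht]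
    ring
  calc ∫ s in Ioo (0:ℝ) t, g s = ∫ x in (0:ℝ)..t, g x := by
        rw [intervalIntegral.integral_of_le ht.le, MeasureTheory.integral_Ioc_eq_integral_Ioo]
    _ = t • ∫ x in (0:ℝ)..1, g (x * t) := h2
    _ = t * (t ^ (p + q) * ∫ x in Ioo (0:ℝ) 1, (1 - x) ^ p * x ^ q) := by
        rw [h3, MeasureTheory.integral_const_mul]; simp [smul_eq_mul]
    _ = t ^ (p + q + 1) * ∫ u in (0:ℝ)..1, (1 - u) ^ p * u ^ q := by
        rw [intervalIntegral.integral_of_le (by norm_num : (0:ℝ) ≤ 1),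
          MeasureTheory.integral_Ioc_eq_integral_Ioo, Real.rpow_add_one ht.ne']
        ring


/-- **Gradient-term kernel estimate.**
For every `a ∈ (0, 1/2)` and `ε ∈ (0, 1/2)` there is `C > 0` such that for all `t > 0`,
`∫_0^t (t-s)^(-1/2-a) s^(-1+a) (1+s)^ε ds ≤ C t^(-1/2) (1+t)^ε`. -/
theorem integral_kernel_gradient_estimate (a : ℝ) (ha : 0 < a) (ha' : a < 1/2)
    (ε : ℝ) (hε : 0 < ε) (hε' : ε < 1/2) :
    ∃ C : ℝ, 0 < C ∧ ∀ t : ℝ, 0 < t →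
      ∫ s in Ioo (0 : ℝ) t, (t - s) ^ (-1/2 - a) * s ^ (-1 + a) * (1 + s) ^ ε ≤
        C * t ^ (-1/2 : ℝ) * (1 + t) ^ ε := by
  have hp : (-1:ℝ) < -1/2 - a := by linarith
  have hp0 : (-1/2 - a : ℝ) ≤ 0 := by linarith
  have hq : (-1:ℝ) < -1 + a := by linarith
  have hq0 : (-1 + a : ℝ) ≤ 0 := by linarith
  set K := ∫ u in (0:ℝ)..1, (1 - u) ^ (-1/2 - a) * u ^ (-1 + a) with hKdef
  have hK0 : 0 ≤ K := by
    refine intervalIntegral.integral_nonneg (by norm_num) fun u hu => ?_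
    exact mul_nonneg (Real.rpow_nonneg (by linarith [hu.2]) _) (Real.rpow_nonneg hu.1 _)
  refine ⟨K + 1, by linarith, fun t ht => ?_⟩
  have hInt := kernel_integrable (-1/2 - a) (-1 + a) t hp hp0 hq hq0 ht
  have step1 : ∫ s in Ioo (0:ℝ) t, (t - s) ^ (-1/2 - a) * s ^ (-1 + a) * (1 + s) ^ ε
      ≤ ∫ s in Ioo (0:ℝ) t, (1 + t) ^ ε * ((t - s) ^ (-1/2 - a) * s ^ (-1 + a)) := by
    refine integral_mono_of_nonneg ?_ (hInt.const_mul _) ?_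
    · filter_upwards [ae_restrict_mem measurableSet_Ioo] with s hs
      exact mul_nonneg (mul_nonneg (Real.rpow_nonneg (by linarith [hs.2]) _)
        (Real.rpow_nonneg hs.1.le _)) (Real.rpow_nonneg (by linarith [hs.1]) _)
    · filter_upwards [ae_restrict_mem measurableSet_Ioo] with s hs
      have h1 : (1 + s : ℝ) ^ ε ≤ (1 + t) ^ ε :=
        Real.rpow_le_rpow (by linarith [hs.1]) (by linarith [hs.2]) hε.le
      have h2 : 0 ≤ (t - s) ^ (-1/2 - a) * s ^ (-1 + a) :=
        mul_nonneg (Real.rpow_nonneg (by linarith [hs.2]) _) (Real.rpow_nonneg hs.1.le _)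
      calc (t - s) ^ (-1/2 - a) * s ^ (-1 + a) * (1 + s) ^ ε
          ≤ (t - s) ^ (-1/2 - a) * s ^ (-1 + a) * (1 + t) ^ ε :=
            mul_le_mul_of_nonneg_left h1 h2
        _ = (1 + t) ^ ε * ((t - s) ^ (-1/2 - a) * s ^ (-1 + a)) := by ring
  have step2 : ∫ s in Ioo (0:ℝ) t, (1 + t) ^ ε * ((t - s) ^ (-1/2 - a) * s ^ (-1 + a))
      = (1 + t) ^ ε * (t ^ ((-1/2 - a) + (-1 + a) + 1) * K) := by
    rw [MeasureTheory.integral_const_mul, kernel_scaling _ _ _ ht]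
  have he : ((-1/2 - a) + (-1 + a) + 1 : ℝ) = -1/2 := by ring
  rw [he] at step2
  have hx : 0 ≤ t ^ (-1/2 : ℝ) * (1 + t) ^ ε :=
    mul_nonneg (Real.rpow_nonneg ht.le _) (Real.rpow_nonneg (by linarith) _)
  calc ∫ s in Ioo (0:ℝ) t, (t - s) ^ (-1/2 - a) * s ^ (-1 + a) * (1 + s) ^ ε
      ≤ (1 + t) ^ ε * (t ^ (-1/2 : ℝ) * K) := step1.trans_eq step2
    _ ≤ (K + 1) * t ^ (-1/2 : ℝ) * (1 + t) ^ ε := by nlinarith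
end

section
/- Let T ∈ (0, ∞], θ > 0, K ≥ 0, and let f : (0, T) → [0, ∞) be measurable with esssup_{s ∈ (0, t)} f(s) < ∞ for every t ∈ (0, T). Assume that for every τ ∈ [0, T), if f = 0 almost everywhere on (0, τ), then f(t) ≤ K · (t−τ)^{θ} · esssup_{s ∈ (τ, t)} f(s) for almost every t ∈ (τ, T). Then f = 0 almost everywhere on (0, T). -/
open MeasureTheory Set ENNReal Filter

lemma aux_ae_union {P : ℝ → Prop} {s : Set ℝ} (hs : MeasurableSet s)
    {t : ℕ → Set ℝ} (ht : ∀ n, MeasurableSet (t n)) (hsub : s ⊆ ⋃ n, t n)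
    (h : ∀ n, ∀ᵐ x ∂(volume : Measure ℝ).restrict (t n), P x) :
    ∀ᵐ x ∂(volume : Measure ℝ).restrict s, P x := by
  rw [ae_iff, Measure.restrict_apply' hs]
  refine measure_mono_null (fun x hx => ?_)
    (measure_iUnion_null (fun n => ?_) : volume (⋃ n, {x | ¬ P x} ∩ t n) = 0)
  · obtain ⟨hnp, hxs⟩ := hx
    obtain ⟨_, ⟨n, rfl⟩, hn⟩ := hsub hxs
    exact mem_iUnion.mpr ⟨n, hnp, hn⟩
  · rw [← Measure.restrict_apply' (ht n)]
    exact ae_iff.mp (h n)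

lemma aux_restrict_Ioo_neZero {a b : ℝ} (hab : a < b) :
    (volume : Measure ℝ).restrict (Ioo a b) ≠ 0 := by
  intro h0
  have h1 : (volume : Measure ℝ).restrict (Ioo a b) (Ioo a b) = 0 := by simp [h0]
  rw [Measure.restrict_apply_self, Real.volume_Ioo] at h1
  exact (ENNReal.ofReal_pos.mpr (by linarith)).ne' h1

lemma aux_essSup_le {f : ℝ → ℝ} {a b c : ℝ} (hab : a < b)
    (hnn : ∀ᵐ s ∂(volume : Measure ℝ).restrict (Ioo a b), 0 ≤ f s)
    (hc : ∀ᵐ s ∂(volume : Measure ℝ).restrict (Ioo a b), f s ≤ c) :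
    essSup f ((volume : Measure ℝ).restrict (Ioo a b)) ≤ c := by
  haveI : (ae ((volume : Measure ℝ).restrict (Ioo a b))).NeBot :=
    ae_neBot.mpr (aux_restrict_Ioo_neZero hab)
  have hbd : IsBoundedUnder (· ≥ ·) (ae ((volume : Measure ℝ).restrict (Ioo a b))) f :=
    ⟨0, by simpa [eventually_map] using hnn⟩
  exact limsup_le_of_le hbd.isCoboundedUnder_le hc

lemma aux_essSup_nonneg {f : ℝ → ℝ} {a b C : ℝ} (hab : a < b)
    (hnn : ∀ᵐ s ∂(volume : Measure ℝ).restrict (Ioo a b), 0 ≤ f s)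
    (hC : ∀ᵐ s ∂(volume : Measure ℝ).restrict (Ioo a b), f s ≤ C) :
    0 ≤ essSup f ((volume : Measure ℝ).restrict (Ioo a b)) := by
  haveI : (ae ((volume : Measure ℝ).restrict (Ioo a b))).NeBot :=
    ae_neBot.mpr (aux_restrict_Ioo_neZero hab)
  have hbd : IsBoundedUnder (· ≤ ·) (ae ((volume : Measure ℝ).restrict (Ioo a b))) f :=
    ⟨C, by simpa [eventually_map] using hC⟩
  obtain ⟨x, hx0, hxle⟩ := (hnn.and (_root_.ae_le_essSup hbd)).exists
  exact hx0.trans hxle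

lemma aux_key (T : ℝ≥0∞) (θ K : ℝ) (hθ : 0 < θ) (hK : 0 ≤ K) (f : ℝ → ℝ)
    (hf0 : ∀ s : ℝ, 0 < s → ENNReal.ofReal s < T → 0 ≤ f s)
    (hbdd : ∀ t : ℝ, 0 < t → ENNReal.ofReal t < T →
      ∃ C : ℝ, ∀ᵐ s ∂volume.restrict (Ioo 0 t), f s ≤ C)
    (hprop : ∀ τ : ℝ, 0 ≤ τ → ENNReal.ofReal τ < T →
      (∀ᵐ s ∂volume.restrict (Ioo 0 τ), f s = 0) →
      ∀ᵐ t ∂volume.restrict {t : ℝ | τ < t ∧ ENNReal.ofReal t < T},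
        f t ≤ K * (t - τ) ^ θ * essSup f (volume.restrict (Ioo τ t)))
    (t₀ : ℝ) (h1 : 0 < t₀) (h2 : ENNReal.ofReal t₀ < T) :
    ∀ᵐ s ∂volume.restrict (Ioo 0 t₀), f s = 0 := by
  set A : Set ℝ := {τ : ℝ | (0 ≤ τ ∧ τ ≤ t₀) ∧ ∀ᵐ s ∂volume.restrict (Ioo 0 τ), f s = 0}
    with hAdef
  have hA0 : (0:ℝ) ∈ A := ⟨⟨le_rfl, h1.le⟩, by simp [Set.Ioo_self]⟩
  have hAne : A.Nonempty := ⟨0, hA0⟩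
  have hAbdd : BddAbove A := ⟨t₀, fun τ hτ => hτ.1.2⟩
  set τs := sSup A with hτsdef
  have hτs0 : 0 ≤ τs := le_csSup hAbdd hA0
  have hτst : τs ≤ t₀ := csSup_le hAne fun τ hτ => hτ.1.2
  have hτsA : ∀ᵐ s ∂volume.restrict (Ioo 0 τs), f s = 0 := by
    obtain ⟨u, -, hut, huA⟩ := exists_seq_tendsto_sSup hAne hAbdd
    refine aux_ae_union measurableSet_Ioo (fun n => measurableSet_Ioo)
      (fun x hx => ?_) (fun n => (huA n).2)
    obtain ⟨n, hn⟩ := ((tendsto_order.mp hut).1 x hx.2).exists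
    exact mem_iUnion.mpr ⟨n, hx.1, hn⟩
  rcases eq_or_lt_of_le hτst with heq | hlt
  · rw [← heq]; exact hτsA
  · exfalso
    have hτsT : ENNReal.ofReal τs < T :=
      lt_of_le_of_lt (ENNReal.ofReal_le_ofReal hτst) h2
    set δ : ℝ := min (t₀ - τs) ((2*K+1)⁻¹ ^ θ⁻¹) with hδdef
    have hδ2 : (0:ℝ) < (2*K+1)⁻¹ ^ θ⁻¹ := Real.rpow_pos_of_pos (by positivity) _
    have hδpos : 0 < δ := lt_min (by linarith) hδ2
    set u := τs + δ with hudef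
    have hδle1 : δ ≤ t₀ - τs := min_le_left _ _
    have hut₀ : u ≤ t₀ := by rw [hudef]; linarith
    have hKδ : K * δ ^ θ ≤ 1/2 := by
      have hδle : δ ≤ (2*K+1)⁻¹ ^ θ⁻¹ := min_le_right _ _
      have h6 : δ ^ θ ≤ (2*K+1)⁻¹ := by
        calc δ ^ θ ≤ ((2*K+1)⁻¹ ^ θ⁻¹) ^ θ := Real.rpow_le_rpow hδpos.le hδle hθ.le
          _ = (2*K+1)⁻¹ := by
            rw [← Real.rpow_mul (by positivity), inv_mul_cancel₀ hθ.ne', Real.rpow_one]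
      calc K * δ ^ θ ≤ K * (2*K+1)⁻¹ := mul_le_mul_of_nonneg_left h6 hK
        _ ≤ 1/2 := by
          rw [← div_eq_mul_inv, div_le_iff₀ (by positivity)]; linarith
    obtain ⟨C, hC⟩ := hbdd t₀ h1 h2
    have hsub1 : Ioo τs u ⊆ Ioo 0 t₀ := fun x hx =>
      ⟨lt_of_le_of_lt hτs0 hx.1, lt_of_lt_of_le hx.2 hut₀⟩
    have hCu : ∀ᵐ s ∂volume.restrict (Ioo τs u), f s ≤ C :=
      hC.filter_mono (ae_mono (Measure.restrict_mono hsub1 le_rfl))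
    have hnnu : ∀ᵐ s ∂volume.restrict (Ioo τs u), 0 ≤ f s :=
      (ae_restrict_mem measurableSet_Ioo).mono fun s hs =>
        hf0 s (lt_of_le_of_lt hτs0 hs.1)
          (lt_of_le_of_lt (ENNReal.ofReal_le_ofReal (lt_of_lt_of_le hs.2 hut₀).le) h2)
    have hτsu : τs < u := by rw [hudef]; linarith
    set M := essSup f (volume.restrict (Ioo τs u)) with hM
    have hM0 : 0 ≤ M := aux_essSup_nonneg hτsu hnnu hCu
    have hMae : ∀ᵐ s ∂volume.restrict (Ioo τs u), f s ≤ M :=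
      _root_.ae_le_essSup ⟨C, by simpa [eventually_map] using hCu⟩
    have hE : ∀ t ∈ Ioo τs u, essSup f (volume.restrict (Ioo τs t)) ≤ M ∧
        0 ≤ essSup f (volume.restrict (Ioo τs t)) := by
      intro t ht
      have hsub2 : Ioo τs t ⊆ Ioo τs u := Ioo_subset_Ioo le_rfl ht.2.le
      have hmono := ae_mono (Measure.restrict_mono hsub2 (le_refl (volume : Measure ℝ)))
      exact ⟨aux_essSup_le ht.1 (hnnu.filter_mono hmono) (hMae.filter_mono hmono),
        aux_essSup_nonneg ht.1 (hnnu.filter_mono hmono) (hCu.filter_mono hmono)⟩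
    have hsub3 : Ioo τs u ⊆ {t : ℝ | τs < t ∧ ENNReal.ofReal t < T} := fun t ht =>
      ⟨ht.1, lt_of_le_of_lt (ENNReal.ofReal_le_ofReal (lt_of_lt_of_le ht.2 hut₀).le) h2⟩
    have hmain : ∀ᵐ t ∂volume.restrict (Ioo τs u),
        f t ≤ K * (t - τs) ^ θ * essSup f (volume.restrict (Ioo τs t)) :=
      (hprop τs hτs0 hτsT hτsA).filter_mono (ae_mono (Measure.restrict_mono hsub3 le_rfl))
    have hhalf : ∀ᵐ t ∂volume.restrict (Ioo τs u), f t ≤ (1/2) * M := by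
      filter_upwards [hmain, ae_restrict_mem measurableSet_Ioo] with t h1t h2t
      obtain ⟨hEle, hE0⟩ := hE t h2t
      have h8 : K * (t - τs) ^ θ ≤ K * δ ^ θ :=
        mul_le_mul_of_nonneg_left
          (Real.rpow_le_rpow (by linarith [h2t.1]) (by
            have := h2t.2; rw [hudef] at this; linarith) hθ.le) hK
      calc f t ≤ K * (t - τs) ^ θ * essSup f (volume.restrict (Ioo τs t)) := h1t
        _ ≤ (K * δ ^ θ) * M := mul_le_mul h8 hEle hE0 (by positivity)
        _ ≤ (1/2) * M := mul_le_mul_of_nonneg_right hKδ hM0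
    have hM2 : M ≤ (1/2) * M := aux_essSup_le hτsu hnnu hhalf
    have hM00 : M = 0 := le_antisymm (by linarith) hM0
    have hfz : ∀ᵐ s ∂volume.restrict (Ioo τs u), f s = 0 := by
      filter_upwards [hMae, hnnu] with s hs1 hs2
      rw [hM00] at hs1; linarith
    have huA : u ∈ A := by
      refine ⟨⟨by rw [hudef]; linarith, hut₀⟩, ?_⟩
      refine aux_ae_union (t := fun n => if n = 0 then Ioo 0 τs else
        if n = 1 then {τs} else Ioo τs u) measurableSet_Ioo (fun n => ?_)
        (fun x hx => ?_) (fun n => ?_)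
      · split_ifs
        · exact measurableSet_Ioo
        · exact measurableSet_singleton _
        · exact measurableSet_Ioo
      · rcases lt_trichotomy x τs with h | h | h
        · exact mem_iUnion.mpr ⟨0, by simp [hx.1, h]⟩
        · exact mem_iUnion.mpr ⟨1, by simp [h]⟩
        · exact mem_iUnion.mpr ⟨2, by simp [h, hx.2]⟩
      · have hz : (volume : Measure ℝ).restrict ({τs} : Set ℝ) = 0 := by
          rw [Measure.restrict_eq_zero]; exact measure_singleton _
        match n with
        | 0 => simpa using hτsA
        | 1 => simp [hz]
        | (n+2) => simpa [Nat.succ_ne_zero] using hfz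
    have : u ≤ τs := le_csSup hAbdd huA
    rw [hudef] at this; linarith


/-- **Propagation-of-vanishing (Fujita–Kato) argument.**
Let `T ∈ (0, ∞]`, `θ > 0`, `K ≥ 0` and let `f : (0,T) → [0,∞)` be measurable and
essentially bounded on `(0,t)` for every `t ∈ (0,T)`.  If vanishing of `f` a.e. on
`(0,τ)` always implies `f t ≤ K (t-τ)^θ · esssup_{(τ,t)} f` for a.e. `t ∈ (τ,T)`, then
`f = 0` a.e. on `(0,T)`. -/
theorem vanishing_propagation (T : ℝ≥0∞) (hT : 0 < T) (θ K : ℝ) (hθ : 0 < θ) (hK : 0 ≤ K)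
    (f : ℝ → ℝ)
    (hf0 : ∀ s : ℝ, 0 < s → ENNReal.ofReal s < T → 0 ≤ f s)
    (hfm : AEMeasurable f (volume.restrict {s : ℝ | 0 < s ∧ ENNReal.ofReal s < T}))
    (hbdd : ∀ t : ℝ, 0 < t → ENNReal.ofReal t < T →
      ∃ C : ℝ, ∀ᵐ s ∂volume.restrict (Ioo 0 t), f s ≤ C)
    (hprop : ∀ τ : ℝ, 0 ≤ τ → ENNReal.ofReal τ < T →
      (∀ᵐ s ∂volume.restrict (Ioo 0 τ), f s = 0) →
      ∀ᵐ t ∂volume.restrict {t : ℝ | τ < t ∧ ENNReal.ofReal t < T},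
        f t ≤ K * (t - τ) ^ θ * essSup f (volume.restrict (Ioo τ t))) :
    ∀ᵐ s ∂volume.restrict {s : ℝ | 0 < s ∧ ENNReal.ofReal s < T}, f s = 0 := by
  have key := aux_key T θ K hθ hK f hf0 hbdd hprop
  have hSmeas : MeasurableSet {s : ℝ | 0 < s ∧ ENNReal.ofReal s < T} := by
    have : {s : ℝ | 0 < s ∧ ENNReal.ofReal s < T}
        = Ioi 0 ∩ {s : ℝ | ENNReal.ofReal s < T} := rfl
    rw [this]
    exact measurableSet_Ioi.inter
      (measurableSet_lt ENNReal.measurable_ofReal measurable_const)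
  rcases eq_or_ne T ⊤ with rfl | hTtop
  · refine aux_ae_union (t := fun n : ℕ => Ioo 0 ((n : ℝ) + 1)) hSmeas
      (fun n => measurableSet_Ioo) (fun x hx => ?_) (fun n => key _ (by positivity)
      (by simp [ENNReal.ofReal_lt_top]))
    obtain ⟨n, hn⟩ := exists_nat_gt x
    exact mem_iUnion.mpr ⟨n, hx.1, by linarith⟩
  · set L := T.toReal with hLdef
    have hL : 0 < L := ENNReal.toReal_pos hT.ne' hTtop
    have hTL : ENNReal.ofReal L = T := ENNReal.ofReal_toReal hTtop
    refine aux_ae_union (t := fun n : ℕ => Ioo 0 (L - L / ((n : ℝ) + 2))) hSmeas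
      (fun n => measurableSet_Ioo) (fun x hx => ?_) (fun n => ?_)
    · have hxL : x < L := by
        rw [← hTL] at hx
        exact (ENNReal.ofReal_lt_ofReal_iff hL).mp hx.2
      have hLx : 0 < L - x := by linarith
      obtain ⟨n, hn⟩ := exists_nat_gt (L / (L - x))
      have h9 : L / (L - x) < (n : ℝ) + 2 := by linarith
      rw [div_lt_iff₀ hLx] at h9
      have h10 : L / ((n : ℝ) + 2) < L - x := by
        rw [div_lt_iff₀ (by positivity)]
        nlinarith
      exact mem_iUnion.mpr ⟨n, hx.1, by linarith⟩
    · have hdiv : 0 < L / ((n : ℝ) + 2) := by positivity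
      have hlt : L - L / ((n : ℝ) + 2) < L := by linarith
      have hpos : 0 < L - L / ((n : ℝ) + 2) := by
        have : L / ((n : ℝ) + 2) < L := by
          rw [div_lt_iff₀ (by positivity : (0:ℝ) < (n : ℝ) + 2)]
          nlinarith
        linarith
      exact key _ hpos (by rw [← hTL]; exact (ENNReal.ofReal_lt_ofReal_iff hL).mpr hlt)
end
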